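/- Let V be a steplike potential with steps V₊, V₋ and threshold x_M, let z ∈ ℂ, and let r₊, r₋ ∈ ℂ satisfy r₊² = z − V₊ and r₋² = z − V₋. Suppose v₁ and v₂ are solutions of −u'' + V u = z u, and there are constants T₁, R₁, T₂, R₂ ∈ ℂ with: v₁(x) = e^{i r₋ x} + R₁ e^{−i r₋ x} for all x ≤ −x_M and v₁(x) = T₁ e^{i r₊ x} for all x ≥ x_M; v₂(x) = e^{i r₋ x} + R₂ e^{−i r₋ x} for all x ≤ −x_M and v₂(x) = T₂ e^{−i r₊ x} for all x ≥ x_M. Then r₊ T₁ T₂ = r₋ (R₂ − R₁). -/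

import Mathlib

open Complex MeasureTheory
open scoped Classical

/-- `u` is a solution of `-u'' + V u = z u`: `u` is differentiable with continuous
derivative, and the derivative satisfies the integrated form of the ODE. -/
def IsSolution (V : ℝ → ℝ) (z : ℂ) (u : ℝ → ℂ) : Prop :=
  Differentiable ℝ u ∧ Continuous (deriv u) ∧
    ∀ x : ℝ, deriv u x = deriv u 0 + ∫ t in (0:ℝ)..x, ((V t : ℂ) - z) * u t


/-- Fubini swap on a triangle. -/
lemma triangle_swap {a b : ℝ} (hab : a ≤ b) {f g : ℝ → ℂ}
    (hf : IntegrableOn f (Set.Ioc a b)) (hg : Continuous g) :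
    (∫ t in a..b, (∫ s in t..b, g s) * f t) = ∫ s in a..b, g s * ∫ t in a..s, f t := by
  have hgi : IntegrableOn g (Set.Ioc a b) := hg.integrableOn_Ioc
  set μ := volume.restrict (Set.Ioc a b) with hμ
  have hS : MeasurableSet {p : ℝ × ℝ | p.1 < p.2} :=
    measurableSet_lt measurable_fst measurable_snd
  set F : ℝ × ℝ → ℂ := ({p : ℝ × ℝ | p.1 < p.2}).indicator (fun p => f p.1 * g p.2) with hF
  have hFint : Integrable F (μ.prod μ) := (Integrable.mul_prod hf hgi).indicator hS
  have swap : (∫ t, ∫ s, F (t, s) ∂μ ∂μ) = ∫ s, ∫ t, F (t, s) ∂μ ∂μ :=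
    MeasureTheory.integral_integral_swap (f := fun t s => F (t, s)) hFint
  have h1 : ∀ t : ℝ, (fun s => F (t, s)) = (Set.Ioi t).indicator (fun s => f t * g s) := by
    intro t; funext s
    by_cases h : t < s <;> simp [hF, Set.indicator, h, Set.mem_Ioi]
  have h2 : ∀ s : ℝ, (fun t => F (t, s)) = (Set.Iio s).indicator (fun t => f t * g s) := by
    intro s; funext t
    by_cases h : t < s <;> simp [hF, Set.indicator, h, Set.mem_Iio]
  have hL : (∫ t, (∫ s, F (t, s) ∂μ) ∂μ) = ∫ t in a..b, (∫ s in t..b, g s) * f t := by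
    rw [intervalIntegral.integral_of_le hab]
    refine setIntegral_congr_fun measurableSet_Ioc (fun t ht => ?_)
    rw [h1 t, integral_indicator measurableSet_Ioi, hμ,
      Measure.restrict_restrict measurableSet_Ioi]
    have hset : Set.Ioi t ∩ Set.Ioc a b = Set.Ioc t b := by
      ext s
      simp only [Set.mem_inter_iff, Set.mem_Ioi, Set.mem_Ioc]
      exact ⟨fun ⟨u1, _, u3⟩ => ⟨u1, u3⟩, fun ⟨u1, u2⟩ => ⟨u1, lt_trans ht.1 u1, u2⟩⟩
    rw [hset, MeasureTheory.integral_const_mul, ← intervalIntegral.integral_of_le ht.2, mul_comm]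
  have hR : (∫ s, (∫ t, F (t, s) ∂μ) ∂μ) = ∫ s in a..b, g s * ∫ t in a..s, f t := by
    rw [intervalIntegral.integral_of_le hab]
    refine setIntegral_congr_fun measurableSet_Ioc (fun s hs => ?_)
    rw [h2 s, integral_indicator measurableSet_Iio, hμ,
      Measure.restrict_restrict measurableSet_Iio]
    have hset : Set.Iio s ∩ Set.Ioc a b = Set.Ioo a s := by
      ext t
      simp only [Set.mem_inter_iff, Set.mem_Iio, Set.mem_Ioc, Set.mem_Ioo]
      exact ⟨fun ⟨u1, u2, _⟩ => ⟨u2, u1⟩, fun ⟨u1, u2⟩ => ⟨u2, u1, le_trans u2.le hs.2⟩⟩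
    rw [hset, MeasureTheory.integral_mul_const, ← MeasureTheory.integral_Ioc_eq_integral_Ioo,
      ← intervalIntegral.integral_of_le hs.1.le, mul_comm]
  rw [← hL, swap, hR]

/-- Integration by parts where one factor is a primitive of an integrable function. -/
lemma ibp_primitive {a b : ℝ} (hab : a ≤ b) {f φ : ℝ → ℂ}
    (hfi : IntervalIntegrable f volume a b)
    (hφ : Differentiable ℝ φ) (hφ' : Continuous (deriv φ)) :
    φ b * (∫ t in a..b, f t) =
      (∫ t in a..b, φ t * f t) + ∫ s in a..b, deriv φ s * ∫ t in a..s, f t := by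
  have hstep : ∀ t : ℝ, (∫ s in t..b, deriv φ s) = φ b - φ t := fun t =>
    intervalIntegral.integral_deriv_eq_sub (fun x _ => hφ x) (hφ'.intervalIntegrable _ _)
  have hswap := triangle_swap hab hfi.1 hφ'
  have e1 : (∫ t in a..b, (∫ s in t..b, deriv φ s) * f t) = ∫ t in a..b, (φ b - φ t) * f t :=
    intervalIntegral.integral_congr (fun t _ => by rw [hstep t])
  have hφf : IntervalIntegrable (fun t => φ t * f t) volume a b :=
    hfi.continuousOn_mul hφ.continuous.continuousOn
  have hbf : IntervalIntegrable (fun t => φ b * f t) volume a b := hfi.const_mul _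
  have e2 : (∫ t in a..b, (φ b - φ t) * f t)
      = φ b * (∫ t in a..b, f t) - ∫ t in a..b, φ t * f t := by
    simp_rw [sub_mul]
    rw [intervalIntegral.integral_sub hbf hφf, intervalIntegral.integral_const_mul]
  rw [e1, e2] at hswap
  linear_combination hswap
lemma solution_rhs_intervalIntegrable {V : ℝ → ℝ} {z : ℂ} {v : ℝ → ℂ}
    (hVmeas : Measurable V) (hVbdd : ∃ C : ℝ, ∀ x : ℝ, |V x| ≤ C)
    (hv : Continuous v) (p q : ℝ) :
    IntervalIntegrable (fun t => ((V t : ℂ) - z) * v t) volume p q := by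
  obtain ⟨C, hC⟩ := hVbdd
  have key : ∀ p q : ℝ, IntegrableOn (fun t => ((V t : ℂ) - z) * v t) (Set.Ioc p q) := by
    intro p q
    obtain ⟨M, hM⟩ := (isCompact_Icc (a := p) (b := q)).exists_bound_of_continuousOn
      hv.continuousOn
    refine Measure.integrableOn_of_bounded (M := (C + ‖z‖) * max M 0) measure_Ioc_lt_top.ne
      ((((Complex.measurable_ofReal.comp hVmeas).sub measurable_const).mul
        hv.measurable).aestronglyMeasurable) ?_
    filter_upwards [ae_restrict_mem measurableSet_Ioc] with t ht
    have h1 : ‖(V t : ℂ) - z‖ ≤ C + ‖z‖ := by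
      calc ‖(V t : ℂ) - z‖ ≤ ‖(V t : ℂ)‖ + ‖z‖ := norm_sub_le _ _
      _ ≤ C + ‖z‖ := by
          have : ‖(V t : ℂ)‖ = |V t| := by simp
          rw [this]; linarith [hC t]
    have h2 : ‖v t‖ ≤ max M 0 := le_trans (hM t ⟨ht.1.le, ht.2⟩) (le_max_left _ _)
    calc ‖((V t : ℂ) - z) * v t‖ = ‖(V t : ℂ) - z‖ * ‖v t‖ := norm_mul _ _
    _ ≤ (C + ‖z‖) * max M 0 := by
        apply mul_le_mul h1 h2 (norm_nonneg _)
        linarith [abs_nonneg (V t), hC t, norm_nonneg z]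
  exact ⟨key p q, key q p⟩

lemma wronskian_eq {V : ℝ → ℝ} {z : ℂ} {v₁ v₂ : ℝ → ℂ}
    (hVmeas : Measurable V) (hVbdd : ∃ C : ℝ, ∀ x : ℝ, |V x| ≤ C)
    (hv₁ : IsSolution V z v₁) (hv₂ : IsSolution V z v₂) {a b : ℝ} (hab : a ≤ b) :
    v₁ b * deriv v₂ b - deriv v₁ b * v₂ b = v₁ a * deriv v₂ a - deriv v₁ a * v₂ a := by
  set f₁ : ℝ → ℂ := fun t => ((V t : ℂ) - z) * v₁ t with hf₁
  set f₂ : ℝ → ℂ := fun t => ((V t : ℂ) - z) * v₂ t with hf₂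
  have hint₁ : ∀ p q : ℝ, IntervalIntegrable f₁ volume p q :=
    solution_rhs_intervalIntegrable hVmeas hVbdd hv₁.1.continuous
  have hint₂ : ∀ p q : ℝ, IntervalIntegrable f₂ volume p q :=
    solution_rhs_intervalIntegrable hVmeas hVbdd hv₂.1.continuous
  -- derivative formulas with base point a
  have hdf : ∀ (v : ℝ → ℂ) (f : ℝ → ℂ), IsSolution V z v →
      (∀ x : ℝ, deriv v x = deriv v 0 + ∫ t in (0:ℝ)..x, f t) →
      (∀ p q : ℝ, IntervalIntegrable f volume p q) →
      ∀ x : ℝ, (∫ t in a..x, f t) = deriv v x - deriv v a := by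
    intro v f hv hfo hfi x
    have hsub := intervalIntegral.integral_interval_sub_left (hfi 0 x) (hfi 0 a)
    linear_combination hfo a - hfo x - hsub
  have hdf₁ : ∀ x : ℝ, (∫ t in a..x, f₁ t) = deriv v₁ x - deriv v₁ a :=
    hdf v₁ f₁ hv₁ hv₁.2.2 hint₁
  have hdf₂ : ∀ x : ℝ, (∫ t in a..x, f₂ t) = deriv v₂ x - deriv v₂ a :=
    hdf v₂ f₂ hv₂ hv₂.2.2 hint₂
  -- FTC for v
  have hftc₁ : (∫ s in a..b, deriv v₁ s) = v₁ b - v₁ a :=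
    intervalIntegral.integral_deriv_eq_sub (fun x _ => hv₁.1 x)
      (hv₁.2.1.intervalIntegrable _ _)
  have hftc₂ : (∫ s in a..b, deriv v₂ s) = v₂ b - v₂ a :=
    intervalIntegral.integral_deriv_eq_sub (fun x _ => hv₂.1 x)
      (hv₂.2.1.intervalIntegrable _ _)
  -- IBP identities
  have k1 := ibp_primitive hab (hint₂ a b) hv₁.1 hv₁.2.1
  have k2 := ibp_primitive hab (hint₁ a b) hv₂.1 hv₂.2.1
  have hPQ : (∫ t in a..b, v₁ t * f₂ t) = ∫ t in a..b, v₂ t * f₁ t :=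
    intervalIntegral.integral_congr (fun t _ => by simp only [hf₁, hf₂]; ring)
  -- rewrite inner primitives
  have hc₁ : Continuous (deriv v₁) := hv₁.2.1
  have hc₂ : Continuous (deriv v₂) := hv₂.2.1
  have e1 : (∫ s in a..b, deriv v₁ s * ∫ t in a..s, f₂ t)
      = (∫ s in a..b, deriv v₁ s * deriv v₂ s) - (v₁ b - v₁ a) * deriv v₂ a := by
    have : (∫ s in a..b, deriv v₁ s * ∫ t in a..s, f₂ t)
        = ∫ s in a..b, (deriv v₁ s * deriv v₂ s - deriv v₁ s * deriv v₂ a) :=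
      intervalIntegral.integral_congr (fun s _ => by rw [hdf₂ s]; ring)
    rw [this, intervalIntegral.integral_sub (f := fun s => deriv v₁ s * deriv v₂ s)
      (g := fun s => deriv v₁ s * deriv v₂ a) ((hc₁.mul hc₂).intervalIntegrable _ _)
      ((hc₁.mul continuous_const).intervalIntegrable _ _),
      intervalIntegral.integral_mul_const, hftc₁]
  have e2 : (∫ s in a..b, deriv v₂ s * ∫ t in a..s, f₁ t)
      = (∫ s in a..b, deriv v₁ s * deriv v₂ s) - (v₂ b - v₂ a) * deriv v₁ a := by
    have : (∫ s in a..b, deriv v₂ s * ∫ t in a..s, f₁ t)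
        = ∫ s in a..b, (deriv v₁ s * deriv v₂ s - deriv v₂ s * deriv v₁ a) :=
      intervalIntegral.integral_congr (fun s _ => by rw [hdf₁ s]; ring)
    rw [this, intervalIntegral.integral_sub (f := fun s => deriv v₁ s * deriv v₂ s)
      (g := fun s => deriv v₂ s * deriv v₁ a) ((hc₁.mul hc₂).intervalIntegrable _ _)
      ((hc₂.mul continuous_const).intervalIntegrable _ _),
      intervalIntegral.integral_mul_const, hftc₂]
  rw [hdf₂ b] at k1
  rw [hdf₁ b] at k2
  rw [e1] at k1
  rw [e2] at k2
  linear_combination k1 - k2 + hPQ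

lemma hasDerivAt_cexp_mul (c : ℂ) (x : ℝ) :
    HasDerivAt (fun y : ℝ => Complex.exp (c * y)) (c * Complex.exp (c * x)) x := by
  have h1 : HasDerivAt (fun y : ℂ => Complex.exp (c * y)) (c * Complex.exp (c * x)) (x : ℂ) := by
    simpa [mul_comm] using ((hasDerivAt_id (x : ℂ)).const_mul c).cexp
  exact h1.comp_ofReal

theorem reflection_difference_relation_right
    (V : ℝ → ℝ) (Vp Vm xM : ℝ)
    (hVmeas : Measurable V) (hVbdd : ∃ C : ℝ, ∀ x : ℝ, |V x| ≤ C)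
    (hxM : 0 < xM)
    (hVp : ∀ x : ℝ, xM < x → V x = Vp)
    (hVm : ∀ x : ℝ, x < -xM → V x = Vm)
    (z rp rm : ℂ) (hrp : rp ^ 2 = z - (Vp : ℂ)) (hrm : rm ^ 2 = z - (Vm : ℂ))
    (v₁ v₂ : ℝ → ℂ) (hv₁ : IsSolution V z v₁) (hv₂ : IsSolution V z v₂)
    (T₁ R₁ T₂ R₂ : ℂ)
    (hv₁L : ∀ x : ℝ, x ≤ -xM →
      v₁ x = Complex.exp (Complex.I * rm * x) + R₁ * Complex.exp (-(Complex.I * rm * x)))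
    (hv₁R : ∀ x : ℝ, xM ≤ x → v₁ x = T₁ * Complex.exp (Complex.I * rp * x))
    (hv₂L : ∀ x : ℝ, x ≤ -xM →
      v₂ x = Complex.exp (Complex.I * rm * x) + R₂ * Complex.exp (-(Complex.I * rm * x)))
    (hv₂R : ∀ x : ℝ, xM ≤ x → v₂ x = T₂ * Complex.exp (-(Complex.I * rp * x))) :
    rp * T₁ * T₂ = rm * (R₂ - R₁) := by
  set a : ℝ := -(xM + 1) with ha_def
  set b : ℝ := xM + 1 with hb_def
  have hab : a ≤ b := by simp only [ha_def, hb_def]; linarith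
  have hbmem : xM < b := by simp only [hb_def]; linarith
  have hamem : a < -xM := by simp only [ha_def]; linarith
  have hW := wronskian_eq hVmeas hVbdd hv₁ hv₂ hab
  -- values at b
  have hv₁b : v₁ b = T₁ * Complex.exp (Complex.I * rp * b) := hv₁R b hbmem.le
  have hv₂b : v₂ b = T₂ * Complex.exp (-(Complex.I * rp) * b) := by
    rw [hv₂R b hbmem.le, neg_mul]
  -- derivatives at b
  have hd₁b : deriv v₁ b = T₁ * (Complex.I * rp * Complex.exp (Complex.I * rp * b)) := by
    have heq : v₁ =ᶠ[nhds b] fun x : ℝ => T₁ * Complex.exp (Complex.I * rp * x) := by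
      filter_upwards [Ioi_mem_nhds hbmem] with x hx using hv₁R x (le_of_lt hx)
    rw [heq.deriv_eq]
    exact ((hasDerivAt_cexp_mul (Complex.I * rp) b).const_mul T₁).deriv
  have hd₂b : deriv v₂ b = T₂ * (-(Complex.I * rp) * Complex.exp (-(Complex.I * rp) * b)) := by
    have heq : v₂ =ᶠ[nhds b] fun x : ℝ => T₂ * Complex.exp (-(Complex.I * rp) * x) := by
      filter_upwards [Ioi_mem_nhds hbmem] with x hx
      rw [hv₂R x (le_of_lt hx), neg_mul]
    rw [heq.deriv_eq]
    exact ((hasDerivAt_cexp_mul (-(Complex.I * rp)) b).const_mul T₂).deriv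
  -- values at a
  have hv₁a : v₁ a = Complex.exp (Complex.I * rm * a) + R₁ * Complex.exp (-(Complex.I * rm) * a) := by
    rw [hv₁L a hamem.le, neg_mul]
  have hv₂a : v₂ a = Complex.exp (Complex.I * rm * a) + R₂ * Complex.exp (-(Complex.I * rm) * a) := by
    rw [hv₂L a hamem.le, neg_mul]
  -- derivatives at a
  have hd₁a : deriv v₁ a = Complex.I * rm * Complex.exp (Complex.I * rm * a)
      + R₁ * (-(Complex.I * rm) * Complex.exp (-(Complex.I * rm) * a)) := by
    have heq : v₁ =ᶠ[nhds a] fun x : ℝ =>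
        Complex.exp (Complex.I * rm * x) + R₁ * Complex.exp (-(Complex.I * rm) * x) := by
      filter_upwards [Iio_mem_nhds hamem] with x hx
      rw [hv₁L x (le_of_lt hx), neg_mul]
    rw [heq.deriv_eq]
    exact ((hasDerivAt_cexp_mul (Complex.I * rm) a).add
      ((hasDerivAt_cexp_mul (-(Complex.I * rm)) a).const_mul R₁)).deriv
  have hd₂a : deriv v₂ a = Complex.I * rm * Complex.exp (Complex.I * rm * a)
      + R₂ * (-(Complex.I * rm) * Complex.exp (-(Complex.I * rm) * a)) := by
    have heq : v₂ =ᶠ[nhds a] fun x : ℝ =>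
        Complex.exp (Complex.I * rm * x) + R₂ * Complex.exp (-(Complex.I * rm) * x) := by
      filter_upwards [Iio_mem_nhds hamem] with x hx
      rw [hv₂L x (le_of_lt hx), neg_mul]
    rw [heq.deriv_eq]
    exact ((hasDerivAt_cexp_mul (Complex.I * rm) a).add
      ((hasDerivAt_cexp_mul (-(Complex.I * rm)) a).const_mul R₂)).deriv
  rw [hv₁b, hv₂b, hd₁b, hd₂b, hv₁a, hv₂a, hd₁a, hd₂a] at hW
  have hpb : Complex.exp (Complex.I * rp * b) * Complex.exp (-(Complex.I * rp) * b) = 1 := by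
    rw [← Complex.exp_add, show Complex.I * rp * (b:ℂ) + -(Complex.I * rp) * (b:ℂ) = 0 by ring,
      Complex.exp_zero]
  have hpa : Complex.exp (Complex.I * rm * a) * Complex.exp (-(Complex.I * rm) * a) = 1 := by
    rw [← Complex.exp_add, show Complex.I * rm * (a:ℂ) + -(Complex.I * rm) * (a:ℂ) = 0 by ring,
      Complex.exp_zero]
  linear_combination (Complex.I / 2) * hW
    + (rp * T₁ * T₂ * (Complex.exp (Complex.I * rp * b) * Complex.exp (-(Complex.I * rp) * b))
      + rm * (R₁ - R₂) * (Complex.exp (Complex.I * rm * a) * Complex.exp (-(Complex.I * rm) * a)))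
        * Complex.I_sq
    - rp * T₁ * T₂ * hpb - rm * (R₁ - R₂) * hpa
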